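/- Let H be a d×d symmetric positive definite real matrix, g ∈ ℝ^d, and ε ∈ (0, 1). Suppose H̃_1, …, H̃_m are symmetric positive definite matrices with (1−ε)H ⪯ H̃_i ⪯ (1+ε)H for every i ∈ [m] and (1/m)·Σ_{i=1}^m H̃_i = H. Define φ(p) = pᵀHp − 2pᵀg and p̃ = (1/m)·Σ_{i=1}^m H̃_i⁻¹g. Then min_p φ(p) ≤ φ(p̃) ≤ (1 − α²)·min_p φ(p), where α = ε²/(1−ε). -/

import Mathlib

open Matrix

noncomputable section

namespace GiantAux

variable {n : Type*} [Fintype n] [DecidableEq n]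

lemma qf_nonneg {A : Matrix n n ℝ} (hA : A.PosSemidef) (x : n → ℝ) :
    0 ≤ x ⬝ᵥ (A *ᵥ x) := by simpa using hA.dotProduct_mulVec_nonneg x

lemma psd_of {A : Matrix n n ℝ} (h1 : A.IsHermitian) (h2 : ∀ x, 0 ≤ x ⬝ᵥ (A *ᵥ x)) :
    A.PosSemidef := PosSemidef.of_dotProduct_mulVec_nonneg h1 fun x => by simpa using h2 x

lemma transpose_eq {A : Matrix n n ℝ} (hA : A.IsHermitian) : Aᵀ = A := by
  rw [← conjTranspose_eq_transpose_of_trivial]; exact hA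

lemma herm_dot {A : Matrix n n ℝ} (hA : A.IsHermitian) (x y : n → ℝ) :
    (A *ᵥ x) ⬝ᵥ y = x ⬝ᵥ (A *ᵥ y) := by
  rw [dotProduct_mulVec x A y, ← vecMul_transpose, transpose_eq hA, dotProduct_comm]

lemma qf_mono {A B : Matrix n n ℝ} (h : (B - A).PosSemidef) (x : n → ℝ) :
    x ⬝ᵥ (A *ᵥ x) ≤ x ⬝ᵥ (B *ᵥ x) := by
  have := qf_nonneg h x
  rw [sub_mulVec, dotProduct_sub] at this
  linarith

/-- Cauchy–Schwarz for a PSD bilinear form. -/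
lemma psd_cs {A : Matrix n n ℝ} (hA : A.PosSemidef) (x y : n → ℝ) :
    (x ⬝ᵥ (A *ᵥ y)) ^ 2 ≤ (x ⬝ᵥ (A *ᵥ x)) * (y ⬝ᵥ (A *ᵥ y)) := by
  have key : ∀ t : ℝ, 0 ≤ (y ⬝ᵥ (A *ᵥ y)) * (t * t) + (2 * (x ⬝ᵥ (A *ᵥ y))) * t
      + (x ⬝ᵥ (A *ᵥ x)) := by
    intro t
    have h0 := qf_nonneg hA (x + t • y)
    have hswap : (A *ᵥ y) ⬝ᵥ x = y ⬝ᵥ (A *ᵥ x) := herm_dot hA.1 y x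
    have hsym : y ⬝ᵥ (A *ᵥ x) = x ⬝ᵥ (A *ᵥ y) := by
      rw [← herm_dot hA.1 y x, dotProduct_comm]
    simp only [mulVec_add, mulVec_smul, dotProduct_add, add_dotProduct,
      dotProduct_smul, smul_dotProduct, smul_eq_mul] at h0
    rw [hsym] at h0
    nlinarith [h0]
  have hd := discrim_le_zero key
  rw [discrim] at hd
  nlinarith [hd]

lemma sum_psd {ι : Type*} (s : Finset ι) (f : ι → Matrix n n ℝ)
    (h : ∀ i ∈ s, (f i).PosSemidef) : (∑ i ∈ s, f i).PosSemidef := by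
  classical
  induction s using Finset.induction_on with
  | empty => simpa using Matrix.PosSemidef.zero
  | insert _ _ hx ih =>
    rw [Finset.sum_insert hx]
    exact ((h _ (Finset.mem_insert_self _ _)).add
      (ih fun i hi => h i (Finset.mem_insert_of_mem hi)))

lemma psd_smul {A : Matrix n n ℝ} (hA : A.PosSemidef) {c : ℝ} (hc : 0 ≤ c) :
    (c • A).PosSemidef := by
  refine psd_of ?_ fun x => ?_
  · unfold Matrix.IsHermitian
    rw [conjTranspose_smul, hA.1, star_trivial]
  · rw [smul_mulVec, dotProduct_smul, smul_eq_mul]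
    exact mul_nonneg hc (qf_nonneg hA x)

lemma congr_psd {A B : Matrix n n ℝ} (hA : A.PosSemidef) (hB : B.IsHermitian) :
    (B * A * B).PosSemidef := by
  have := hA.mul_mul_conjTranspose_same B
  rwa [hB] at this

/-- Inverse is antitone on positive definite matrices. -/
lemma inv_antitone {A B : Matrix n n ℝ} (hA : A.PosDef) (hB : B.PosDef)
    (hAB : (B - A).PosSemidef) : (A⁻¹ - B⁻¹).PosSemidef := by
  have hAdet : IsUnit A.det := isUnit_iff_ne_zero.mpr hA.det_pos.ne'
  have hBdet : IsUnit B.det := isUnit_iff_ne_zero.mpr hB.det_pos.ne'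
  refine psd_of (hA.inv.1.sub hB.inv.1) fun x => ?_
  rw [sub_mulVec, dotProduct_sub, sub_nonneg]
  set u := B⁻¹ *ᵥ x with hu
  set v := A⁻¹ *ᵥ x with hv
  set c := x ⬝ᵥ (B⁻¹ *ᵥ x) with hc
  set e := x ⬝ᵥ (A⁻¹ *ᵥ x) with he
  have hAv : A *ᵥ v = x := by
    rw [hv, mulVec_mulVec, mul_nonsing_inv _ hAdet, one_mulVec]
  have hBu : B *ᵥ u = x := by
    rw [hu, mulVec_mulVec, mul_nonsing_inv _ hBdet, one_mulVec]
  have huAv : u ⬝ᵥ (A *ᵥ v) = c := by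
    rw [hAv, hu, dotProduct_comm, hc]
  have hcs := psd_cs hA.posSemidef u v
  have huAu : u ⬝ᵥ (A *ᵥ u) ≤ c := by
    have h1 := qf_mono hAB u
    have h2 : u ⬝ᵥ (B *ᵥ u) = c := by rw [hBu, hu, dotProduct_comm, hc]
    linarith
  have hvAv : v ⬝ᵥ (A *ᵥ v) = e := by rw [hAv, hv, dotProduct_comm, he]
  have hc0 : 0 ≤ c := qf_nonneg hB.inv.posSemidef x
  have he0 : 0 ≤ e := qf_nonneg hA.inv.posSemidef x
  have huAu0 : 0 ≤ u ⬝ᵥ (A *ᵥ u) := qf_nonneg hA.posSemidef u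
  rcases eq_or_lt_of_le hc0 with h | h
  · linarith
  · -- c^2 ≤ (uAu) * e ≤ c * e
    have : c ^ 2 ≤ c * e := by
      calc c ^ 2 = (u ⬝ᵥ (A *ᵥ v)) ^ 2 := by rw [huAv]
        _ ≤ (u ⬝ᵥ (A *ᵥ u)) * (v ⬝ᵥ (A *ᵥ v)) := hcs
        _ ≤ c * e := by rw [hvAv]; exact mul_le_mul_of_nonneg_right huAu he0
    nlinarith

lemma dot_self_nonneg (x : n → ℝ) : 0 ≤ x ⬝ᵥ x :=
  Finset.sum_nonneg fun i _ => mul_self_nonneg _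

/-- If `-ε•1 ⪯ S ⪯ ε•1` for a symmetric `S`, then `S*S ⪯ ε^2•1`. -/
lemma sq_le_of_abs_le {S : Matrix n n ℝ} (hS : S.IsHermitian) {ε : ℝ} (hε : 0 ≤ ε)
    (h1 : ((ε • 1 : Matrix n n ℝ) - S).PosSemidef)
    (h2 : ((ε • 1 : Matrix n n ℝ) + S).PosSemidef) :
    ((ε ^ 2 • 1 : Matrix n n ℝ) - S * S).PosSemidef := by
  have herm : ((ε ^ 2 • 1 : Matrix n n ℝ) - S * S).IsHermitian := by
    refine Matrix.IsHermitian.sub ?_ ?_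
    · unfold Matrix.IsHermitian
      rw [conjTranspose_smul]
      simp [Matrix.isHermitian_one.eq]
    · unfold Matrix.IsHermitian
      rw [conjTranspose_mul, hS.eq]
  -- polarization bound : x ⬝ᵥ (S *ᵥ y) ≤ (ε/2) * (x⬝ᵥx + y⬝ᵥy)
  have pol : ∀ x y : n → ℝ, x ⬝ᵥ (S *ᵥ y) ≤ ε / 2 * (x ⬝ᵥ x + y ⬝ᵥ y) := by
    intro x y
    have q1 := qf_nonneg h1 (x + y)
    have q2 := qf_nonneg h2 (x - y)
    have hsym : y ⬝ᵥ (S *ᵥ x) = x ⬝ᵥ (S *ᵥ y) := by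
      rw [← herm_dot hS y x, dotProduct_comm]
    simp only [sub_mulVec, add_mulVec, mulVec_add, mulVec_sub, smul_mulVec,
      one_mulVec, dotProduct_sub, dotProduct_add, add_dotProduct, sub_dotProduct,
      dotProduct_smul, smul_eq_mul] at q1 q2
    rw [hsym] at q1 q2
    have hxy : x ⬝ᵥ y = y ⬝ᵥ x := dotProduct_comm x y
    nlinarith [q1, q2]
  refine psd_of herm fun x => ?_
  rw [sub_mulVec, dotProduct_sub, smul_mulVec, one_mulVec, dotProduct_smul,
    smul_eq_mul, sub_nonneg, ← mulVec_mulVec]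
  have hq : x ⬝ᵥ (S *ᵥ (S *ᵥ x)) = (S *ᵥ x) ⬝ᵥ (S *ᵥ x) := by
    rw [← herm_dot hS x (S *ᵥ x)]
  rw [hq]
  set q := (S *ᵥ x) ⬝ᵥ (S *ᵥ x) with hqdef
  set r := x ⬝ᵥ x with hrdef
  have hq0 : 0 ≤ q := dot_self_nonneg _
  have hr0 : 0 ≤ r := dot_self_nonneg _
  -- use pol with scaled vectors
  set t := Real.sqrt q with ht
  set s := Real.sqrt r with hs
  have ht2 : t ^ 2 = q := Real.sq_sqrt hq0
  have hs2 : s ^ 2 = r := Real.sq_sqrt hr0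
  have ht0 : 0 ≤ t := Real.sqrt_nonneg _
  have hs0 : 0 ≤ s := Real.sqrt_nonneg _
  have hb := pol (t • x) (s • (S *ᵥ x))
  rw [mulVec_smul] at hb
  simp only [dotProduct_smul, smul_dotProduct, smul_eq_mul] at hb
  rw [hq, ← hqdef, ← hrdef, ← ht2, ← hs2] at hb
  -- hb : t * (s * q) ≤ ε/2 * (t*(t*r) + s*(s*q))
  rcases eq_or_lt_of_le ht0 with h | htpos
  · -- t = 0 hence q = 0
    have : q = 0 := by rw [← ht2, ← h]; ring
    rw [this]; positivity
  rcases eq_or_lt_of_le hs0 with h | hspos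
  · -- s = 0 hence r = 0 hence x = 0
    have hr : r = 0 := by rw [← hs2, ← h]; ring
    have hx0 : x = 0 := dotProduct_self_eq_zero.mp hr
    have : q = 0 := by rw [hqdef, hx0]; simp
    rw [this, hr]; ring_nf; exact le_refl 0
  · -- t, s > 0
    have hts : t ≤ ε * s := by
      nlinarith [hb, mul_pos (mul_pos htpos htpos) hspos]
    have h2 : t * t ≤ (ε * s) * (ε * s) := mul_self_le_mul_self ht0 hts
    nlinarith [h2, ht2, hs2]

end GiantAux

namespace GiantAux

variable {n : Type*} [Fintype n] [DecidableEq n]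

lemma pd_smul {A : Matrix n n ℝ} (hA : A.PosDef) {c : ℝ} (hc : 0 < c) :
    (c • A).PosDef := by
  refine PosDef.of_dotProduct_mulVec_pos ?_ ?_
  · unfold Matrix.IsHermitian
    rw [conjTranspose_smul, hA.1, star_trivial]
  · intro x hx
    have h2 := hA.dotProduct_mulVec_pos hx
    simp only [smul_mulVec, dotProduct_smul, smul_eq_mul, star_trivial] at *
    positivity

lemma smul_inv_eq {A : Matrix n n ℝ} (hA : IsUnit A.det) {c : ℝ} (hc : c ≠ 0) :
    (c • A)⁻¹ = c⁻¹ • A⁻¹ := by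
  apply Matrix.inv_eq_right_inv
  rw [smul_mul_assoc, mul_smul_comm, smul_smul, mul_nonsing_inv _ hA,
    mul_inv_cancel₀ hc, one_smul]

lemma sum_mulVec' {ι : Type*} (s : Finset ι) (f : ι → Matrix n n ℝ) (g : n → ℝ) :
    (∑ i ∈ s, f i) *ᵥ g = ∑ i ∈ s, (f i *ᵥ g) := by
  classical
  induction s using Finset.induction_on with
  | empty => simp
  | insert _ _ hx ih =>
    rw [Finset.sum_insert hx, Finset.sum_insert hx, add_mulVec, ih]

end GiantAux

namespace GiantAux

section
open scoped MatrixOrder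

variable {n : Type*} [Fintype n] [DecidableEq n]

/-- A square root of a matrix (via the continuous functional calculus). -/
def msqrt (A : Matrix n n ℝ) : Matrix n n ℝ := CFC.sqrt A

lemma msqrt_mul_self {A : Matrix n n ℝ} (hA : A.PosSemidef) : msqrt A * msqrt A = A :=
  CFC.sqrt_mul_sqrt_self A hA.nonneg

lemma msqrt_herm {A : Matrix n n ℝ} (hA : A.PosSemidef) : (msqrt A).IsHermitian :=
  (CFC.sqrt_nonneg A).posSemidef.1

end

end GiantAux

open GiantAux

/-- the Model Average lemma for GIANT. Averaging the `m` local approximate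
Newton directions `H̃_i⁻¹g` yields a direction that minimizes the auxiliary quadratic
`φ(p) = pᵀHp − 2pᵀg` within factor `1 − α²` with `α = ε²/(1−ε)`. -/
theorem giant_model_average {d m : ℕ}
    (H : Matrix (Fin d) (Fin d) ℝ) (hH : H.PosDef)
    (g : Fin d → ℝ) (ε : ℝ) (hε : 0 < ε ∧ ε < 1)
    (Htil : Fin m → Matrix (Fin d) (Fin d) ℝ)
    (hHtilPD : ∀ i, (Htil i).PosDef)
    (happrox : ∀ i,
      (Htil i - (1 - ε) • H).PosSemidef ∧ ((1 + ε) • H - Htil i).PosSemidef)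
    (havg : ((1 : ℝ) / m) • ∑ i, Htil i = H) :
    let φ : (Fin d → ℝ) → ℝ := fun p => p ⬝ᵥ (H *ᵥ p) - 2 * (p ⬝ᵥ g)
    let pstar : Fin d → ℝ := H⁻¹ *ᵥ g
    let ptil : Fin d → ℝ := ((1 : ℝ) / m) • ∑ i, (Htil i)⁻¹ *ᵥ g
    let α : ℝ := ε ^ 2 / (1 - ε)
    (∀ p, φ pstar ≤ φ p) ∧ φ pstar ≤ φ ptil ∧ φ ptil ≤ (1 - α ^ 2) * φ pstar := by
  intro φ pstar ptil α
  obtain ⟨hε0, hε1⟩ := hε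
  have hε2 : (0:ℝ) < 1 - ε := by linarith
  have hε3 : (0:ℝ) < 1 + ε := by linarith
  have hε4 : (0:ℝ) < 1 - ε ^ 2 := by nlinarith
  have hφ : ∀ p, φ p = p ⬝ᵥ (H *ᵥ p) - 2 * (p ⬝ᵥ g) := fun _ => rfl
  have hα : α = ε ^ 2 / (1 - ε) := rfl
  have hα0 : 0 ≤ α := by rw [hα]; positivity
  rcases Nat.eq_zero_or_pos m with hm | hm
  · subst hm
    have hH0 : H = 0 := by simpa using havg.symm
    have hzero : ∀ p, φ p = 0 := by
      intro p
      rw [hφ]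
      rcases Nat.eq_zero_or_pos d with hd | hd
      · subst hd
        simp [dotProduct]
      · exfalso
        have hx : (fun _ => (1:ℝ) : Fin d → ℝ) ≠ 0 := by
          intro h
          have h2 := congrFun h ⟨0, hd⟩
          norm_num at h2
        have h2 := hH.dotProduct_mulVec_pos hx
        rw [hH0] at h2
        simp at h2
    refine ⟨fun p => le_of_eq (by rw [hzero, hzero]),
      le_of_eq (by rw [hzero, hzero]), ?_⟩
    rw [hzero, hzero, mul_zero]
  have hmR : (0:ℝ) < (m:ℝ) := by exact_mod_cast hm
  have hHdet : IsUnit H.det := isUnit_iff_ne_zero.mpr hH.det_pos.ne'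
  have hHg : H *ᵥ pstar = g := by
    show H *ᵥ (H⁻¹ *ᵥ g) = g
    rw [mulVec_mulVec, mul_nonsing_inv _ hHdet, one_mulVec]
  have hφstar : φ pstar = -(pstar ⬝ᵥ g) := by
    rw [hφ, hHg]; ring
  have hkey : ∀ p, φ p = φ pstar + (p - pstar) ⬝ᵥ (H *ᵥ (p - pstar)) := by
    intro p
    have h1 : pstar ⬝ᵥ (H *ᵥ p) = p ⬝ᵥ g := by
      rw [← herm_dot hH.1 pstar p, hHg, dotProduct_comm]
    rw [hφ, hφstar, mulVec_sub, dotProduct_sub, sub_dotProduct, sub_dotProduct, hHg, h1]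
    ring
  have part1 : ∀ p, φ pstar ≤ φ p := by
    intro p
    rw [hkey p]
    have := qf_nonneg hH.posSemidef (p - pstar)
    linarith
  refine ⟨part1, part1 ptil, ?_⟩
  set K : Matrix (Fin d) (Fin d) ℝ := ((1:ℝ)/m) • ∑ i, (Htil i)⁻¹ with hK
  set C : Matrix (Fin d) (Fin d) ℝ := K - H⁻¹ with hC
  have hHHH : H⁻¹ * H * H⁻¹ = H⁻¹ := by
    rw [nonsing_inv_mul _ hHdet, one_mul]
  have hKherm : K.IsHermitian := by
    rw [hK]
    unfold Matrix.IsHermitian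
    rw [conjTranspose_smul, star_trivial, conjTranspose_sum]
    congr 1
    exact Finset.sum_congr rfl fun i _ => (hHtilPD i).inv.1
  have hCherm : C.IsHermitian := hKherm.sub hH.inv.1
  -- Step 1: C ⪰ 0
  have hE : ∀ i : Fin m, ((Htil i)⁻¹ + H⁻¹ * (Htil i) * H⁻¹ - (H⁻¹ + H⁻¹)).PosSemidef := by
    intro i
    have hGdet : IsUnit (Htil i).det := isUnit_iff_ne_zero.mpr (hHtilPD i).det_pos.ne'
    have hX : ((Htil i)⁻¹ - H⁻¹).IsHermitian := (hHtilPD i).inv.1.sub hH.inv.1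
    have h := congr_psd (hHtilPD i).posSemidef hX
    have e : ((Htil i)⁻¹ - H⁻¹) * (Htil i) * ((Htil i)⁻¹ - H⁻¹)
        = (Htil i)⁻¹ + H⁻¹ * (Htil i) * H⁻¹ - (H⁻¹ + H⁻¹) := by
      simp only [Matrix.sub_mul, Matrix.mul_sub, nonsing_inv_mul _ hGdet, Matrix.one_mul,
        mul_nonsing_inv_cancel_right _ _ hGdet]
      abel
    rwa [e] at h
  have hCpsd : C.PosSemidef := by
    have hsum := sum_psd Finset.univ _ (fun i (_ : i ∈ Finset.univ) => hE i)
    have h2 := psd_smul hsum (by positivity : (0:ℝ) ≤ 1/m)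
    have e : ((1:ℝ)/m) • (∑ i : Fin m, ((Htil i)⁻¹ + H⁻¹ * (Htil i) * H⁻¹ - (H⁻¹ + H⁻¹)))
        = C := by
      rw [Finset.sum_sub_distrib, Finset.sum_add_distrib, ← Matrix.sum_mul, ← Matrix.mul_sum,
        Finset.sum_const, Finset.card_univ, Fintype.card_fin,
        ← Nat.cast_smul_eq_nsmul ℝ m (H⁻¹ + H⁻¹), smul_sub, smul_add, smul_smul,
        one_div, inv_mul_cancel₀ hmR.ne', one_smul, ← smul_mul_assoc, ← mul_smul_comm]
      rw [← one_div, havg, hHHH, hC, ← hK]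
      abel
    rwa [e] at h2
  -- Step 2: per-machine upper bound
  have hD : ∀ i : Fin m,
      ((H⁻¹ + H⁻¹) - H⁻¹ * (Htil i) * H⁻¹ - (1 - ε^2) • (Htil i)⁻¹).PosSemidef := by
    intro i
    obtain ⟨hap1, hap2⟩ := happrox i
    have hGpd := hHtilPD i
    have hGdet : IsUnit (Htil i).det := isUnit_iff_ne_zero.mpr hGpd.det_pos.ne'
    set R : Matrix (Fin d) (Fin d) ℝ := msqrt (Htil i) with hRdef
    have hRR : R * R = Htil i := msqrt_mul_self hGpd.posSemidef
    have hRherm : R.IsHermitian := msqrt_herm hGpd.posSemidef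
    have hRdet : IsUnit R.det := by
      have h2 : R.det * R.det = (Htil i).det := by rw [← det_mul, hRR]
      have h3 := hGdet
      rw [← h2] at h3
      exact (IsUnit.mul_iff.mp h3).1
    have hRiherm : (R⁻¹).IsHermitian := by
      unfold Matrix.IsHermitian
      rw [conjTranspose_nonsing_inv, hRherm.eq]
    have hGinv : (Htil i)⁻¹ = R⁻¹ * R⁻¹ := by rw [← hRR, Matrix.mul_inv_rev]
    have hL : ((Htil i)⁻¹ - (1+ε)⁻¹ • H⁻¹).PosSemidef := by
      have h := inv_antitone hGpd (pd_smul hH hε3) hap2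
      rwa [smul_inv_eq hHdet hε3.ne'] at h
    have hU : ((1-ε)⁻¹ • H⁻¹ - (Htil i)⁻¹).PosSemidef := by
      have h := inv_antitone (pd_smul hH hε2) hGpd hap1
      rwa [smul_inv_eq hHdet hε2.ne'] at h
    set T : Matrix (Fin d) (Fin d) ℝ := R * H⁻¹ * R with hT
    have hTherm : T.IsHermitian := by
      unfold Matrix.IsHermitian
      rw [hT, conjTranspose_mul, conjTranspose_mul, hRherm.eq, hH.inv.1.eq, Matrix.mul_assoc]
    have hRGR : R * (Htil i)⁻¹ * R = 1 := by
      rw [hGinv, ← Matrix.mul_assoc, mul_nonsing_inv _ hRdet, Matrix.one_mul,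
        nonsing_inv_mul _ hRdet]
    have hT1 : (((1+ε):ℝ) • (1 : Matrix (Fin d) (Fin d) ℝ) - T).PosSemidef := by
      have h := psd_smul hL hε3.le
      have h2 := congr_psd h hRherm
      have e : R * (((1+ε):ℝ) • ((Htil i)⁻¹ - (1+ε)⁻¹ • H⁻¹)) * R
          = ((1+ε):ℝ) • (1 : Matrix (Fin d) (Fin d) ℝ) - T := by
        rw [smul_sub, smul_smul, mul_inv_cancel₀ hε3.ne', one_smul,
          Matrix.mul_sub, Matrix.sub_mul, mul_smul_comm, smul_mul_assoc, hRGR, hT]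
      rwa [e] at h2
    have hT2 : (T - ((1-ε):ℝ) • (1 : Matrix (Fin d) (Fin d) ℝ)).PosSemidef := by
      have h := psd_smul hU hε2.le
      have h2 := congr_psd h hRherm
      have e : R * (((1-ε):ℝ) • ((1-ε)⁻¹ • H⁻¹ - (Htil i)⁻¹)) * R
          = T - ((1-ε):ℝ) • (1 : Matrix (Fin d) (Fin d) ℝ) := by
        rw [smul_sub, smul_smul, mul_inv_cancel₀ hε2.ne', one_smul,
          Matrix.mul_sub, Matrix.sub_mul, mul_smul_comm, smul_mul_assoc, hRGR, hT]
      rwa [e] at h2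
    have hSherm : (T - 1).IsHermitian := hTherm.sub Matrix.isHermitian_one
    have h1 : ((ε • 1 : Matrix (Fin d) (Fin d) ℝ) - (T - 1)).PosSemidef := by
      have e : (ε • 1 : Matrix (Fin d) (Fin d) ℝ) - (T - 1)
          = ((1+ε):ℝ) • (1 : Matrix (Fin d) (Fin d) ℝ) - T := by
        module
      rw [e]; exact hT1
    have h2 : ((ε • 1 : Matrix (Fin d) (Fin d) ℝ) + (T - 1)).PosSemidef := by
      have e : (ε • 1 : Matrix (Fin d) (Fin d) ℝ) + (T - 1)
          = T - ((1-ε):ℝ) • (1 : Matrix (Fin d) (Fin d) ℝ) := by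
        module
      rw [e]; exact hT2
    have hsq := sq_le_of_abs_le hSherm hε0.le h1 h2
    have h3 := congr_psd hsq hRiherm
    have hRT : R⁻¹ * T = H⁻¹ * R := by
      rw [hT, Matrix.mul_assoc, nonsing_inv_mul_cancel_left _ _ hRdet]
    have hTR : T * R⁻¹ = R * H⁻¹ := by
      rw [hT, mul_nonsing_inv_cancel_right _ _ hRdet]
    have hTmid : R⁻¹ * T * R⁻¹ = H⁻¹ := by
      rw [hRT, mul_nonsing_inv_cancel_right _ _ hRdet]
    have hTT : R⁻¹ * (T*T) * R⁻¹ = H⁻¹ * (Htil i) * H⁻¹ := by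
      rw [← Matrix.mul_assoc R⁻¹ T T, hRT, Matrix.mul_assoc (H⁻¹ * R) T R⁻¹, hTR,
        ← Matrix.mul_assoc, Matrix.mul_assoc H⁻¹ R R, hRR]
    have e2 : R⁻¹ * ((ε^2 • 1 : Matrix (Fin d) (Fin d) ℝ) - (T-1)*(T-1)) * R⁻¹
        = (H⁻¹ + H⁻¹) - H⁻¹ * (Htil i) * H⁻¹ - (1-ε^2) • (Htil i)⁻¹ := by
      have expand : (T-1)*(T-1) = T*T - T - T + 1 := by
        noncomm_ring
      rw [expand]
      rw [Matrix.mul_sub, Matrix.sub_mul]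
      rw [mul_smul_comm, Matrix.mul_one, smul_mul_assoc]
      simp only [Matrix.mul_add, Matrix.add_mul, Matrix.mul_sub, Matrix.sub_mul,
        Matrix.mul_one, Matrix.one_mul]
      rw [hTT, hTmid, ← hGinv]
      rw [sub_smul, one_smul]
      abel
    rwa [e2] at h3
  -- average the per-machine bounds
  have hUp : (H⁻¹ - (1-ε^2) • K).PosSemidef := by
    have hsum := sum_psd Finset.univ _ (fun i (_ : i ∈ Finset.univ) => hD i)
    have h2 := psd_smul hsum (by positivity : (0:ℝ) ≤ 1/m)
    have e : ((1:ℝ)/m) • (∑ i : Fin m,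
        ((H⁻¹ + H⁻¹) - H⁻¹ * (Htil i) * H⁻¹ - (1 - ε^2) • (Htil i)⁻¹)) 
        = H⁻¹ - (1-ε^2) • K := by
      have hsumG : (∑ i : Fin m, Htil i) = (m:ℝ) • H := by
        rw [← havg, smul_smul, mul_one_div, div_self hmR.ne', one_smul]
      rw [Finset.sum_sub_distrib, Finset.sum_sub_distrib, ← Matrix.sum_mul, ← Matrix.mul_sum,
        ← Finset.smul_sum, Finset.sum_const, Finset.card_univ, Fintype.card_fin,
        hsumG, mul_smul_comm, smul_mul_assoc, hHHH,
        ← Nat.cast_smul_eq_nsmul ℝ m (H⁻¹ + H⁻¹), hK]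
      match_scalars <;> field_simp <;> ring
    rwa [e] at h2
  -- C ⪯ α • H⁻¹
  have hβα : ε^2/(1-ε^2) ≤ α := by
    rw [hα, div_le_div_iff₀ hε4 hε2]
    nlinarith [mul_pos (mul_pos (mul_pos hε0 hε0) hε0) hε2]
  have hmain : ((ε^2:ℝ) • H⁻¹ - (1-ε^2) • C).PosSemidef := by
    have e : (ε^2:ℝ) • H⁻¹ - (1-ε^2) • C = H⁻¹ - (1-ε^2) • K := by
      rw [hC]; module
    rw [e]; exact hUp
  have hαC : (α • H⁻¹ - C).PosSemidef := by
    have h1 := psd_smul hmain (by positivity : (0:ℝ) ≤ (1-ε^2)⁻¹)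
    have e1 : (1-ε^2)⁻¹ • ((ε^2:ℝ) • H⁻¹ - (1-ε^2) • C)
        = (ε^2/(1-ε^2)) • H⁻¹ - C := by
      rw [smul_sub, smul_smul, smul_smul, inv_mul_cancel₀ hε4.ne', one_smul]
      congr 1
      rw [div_eq_inv_mul]
    rw [e1] at h1
    have h2 := psd_smul hH.inv.posSemidef (sub_nonneg.mpr hβα)
    have e2 : α • H⁻¹ - C = ((ε^2/(1-ε^2)) • H⁻¹ - C) + (α - ε^2/(1-ε^2)) • H⁻¹ := by
      module
    rw [e2]; exact h1.add h2
  -- congruence with sqrt H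
  have hCHC : ((α^2 : ℝ) • H⁻¹ - C * H * C).PosSemidef := by
    set Q : Matrix (Fin d) (Fin d) ℝ := msqrt H with hQdef
    have hQQ : Q * Q = H := msqrt_mul_self hH.posSemidef
    have hQherm : Q.IsHermitian := msqrt_herm hH.posSemidef
    have hQdet : IsUnit Q.det := by
      have h2 : Q.det * Q.det = H.det := by rw [← det_mul, hQQ]
      have h3 := hHdet
      rw [← h2] at h3
      exact (IsUnit.mul_iff.mp h3).1
    have hQiherm : (Q⁻¹).IsHermitian := by
      unfold Matrix.IsHermitian
      rw [conjTranspose_nonsing_inv, hQherm.eq]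
    have hHinv : H⁻¹ = Q⁻¹ * Q⁻¹ := by rw [← hQQ, Matrix.mul_inv_rev]
    have hQHQ : Q * H⁻¹ * Q = 1 := by
      rw [hHinv, ← Matrix.mul_assoc, mul_nonsing_inv _ hQdet, Matrix.one_mul,
        nonsing_inv_mul _ hQdet]
    set S : Matrix (Fin d) (Fin d) ℝ := Q * C * Q with hS
    have hSherm : S.IsHermitian := by
      unfold Matrix.IsHermitian
      rw [hS, conjTranspose_mul, conjTranspose_mul, hQherm.eq, hCherm.eq, Matrix.mul_assoc]
    have hSpsd : S.PosSemidef := congr_psd hCpsd hQherm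
    have hup : ((α • 1 : Matrix (Fin d) (Fin d) ℝ) - S).PosSemidef := by
      have h2 := congr_psd hαC hQherm
      have e : Q * (α • H⁻¹ - C) * Q = (α • 1 : Matrix (Fin d) (Fin d) ℝ) - S := by
        rw [Matrix.mul_sub, Matrix.sub_mul, mul_smul_comm, smul_mul_assoc, hQHQ, hS]
      rwa [e] at h2
    have hlow : ((α • 1 : Matrix (Fin d) (Fin d) ℝ) + S).PosSemidef :=
      (psd_smul Matrix.PosSemidef.one hα0).add hSpsd
    have hsq := sq_le_of_abs_le hSherm hα0 hup hlow
    have h3 := congr_psd hsq hQiherm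
    have hQS : Q⁻¹ * S = C * Q := by
      rw [hS, Matrix.mul_assoc, nonsing_inv_mul_cancel_left _ _ hQdet]
    have hSQ : S * Q⁻¹ = Q * C := by
      rw [hS, mul_nonsing_inv_cancel_right _ _ hQdet]
    have hSS : Q⁻¹ * (S*S) * Q⁻¹ = C * H * C := by
      rw [← Matrix.mul_assoc Q⁻¹ S S, hQS, Matrix.mul_assoc (C * Q) S Q⁻¹, hSQ,
        ← Matrix.mul_assoc, Matrix.mul_assoc C Q Q, hQQ]
    have e2 : Q⁻¹ * ((α^2 • 1 : Matrix (Fin d) (Fin d) ℝ) - S*S) * Q⁻¹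
        = (α^2 : ℝ) • H⁻¹ - C * H * C := by
      rw [Matrix.mul_sub, Matrix.sub_mul, mul_smul_comm, Matrix.mul_one, smul_mul_assoc,
        hSS, ← hHinv]
    rwa [e2] at h3
  -- conclude
  have hptil : ptil - pstar = C *ᵥ g := by
    show ((1:ℝ)/m) • ∑ i, (Htil i)⁻¹ *ᵥ g - H⁻¹ *ᵥ g = C *ᵥ g
    rw [hC, hK, sub_mulVec, smul_mulVec, sum_mulVec']
  have hdiff : φ ptil = φ pstar + g ⬝ᵥ ((C * H * C) *ᵥ g) := by
    rw [hkey ptil, hptil]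
    congr 1
    rw [herm_dot hCherm g (H *ᵥ (C *ᵥ g)), mulVec_mulVec, mulVec_mulVec]
  have hqf := qf_mono hCHC g
  have hsm : g ⬝ᵥ (((α^2 : ℝ) • H⁻¹) *ᵥ g) = α^2 * (g ⬝ᵥ (H⁻¹ *ᵥ g)) := by
    rw [smul_mulVec, dotProduct_smul, smul_eq_mul]
  have hpsg : pstar ⬝ᵥ g = g ⬝ᵥ (H⁻¹ *ᵥ g) := dotProduct_comm pstar g
  have hfin : (1-α^2) * φ pstar = φ pstar + α^2 * (g ⬝ᵥ (H⁻¹ *ᵥ g)) := by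
    rw [hφstar, hpsg]; ring
  rw [hdiff, hfin]
  rw [hsm] at hqf
  linarith
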